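/- For the deterministic Q-learning update Q_N(x,u) = r(x,u) + β·max_{u'∈U} Q_{N-1}(δ(x,u),u') (applied at visited pairs, with Q unchanged elsewhere) and the distributed update q_N^j(x,a) = max{q_{N-1}^j(x,a), r(x,u) + β·max_{a'∈A^j} q_{N-1}^j(δ(x,u),a')} (applied when x = x_N, u = u_N, a = u_N(j)), both initialized at zero, if r(x,u) ≥ 0 for all (x,u), then for every agent j, every (x,a), and every N, q_N^j(x,a) = max{Q_N(x,u) : u ∈ U, u(j) = a}. -/

import Mathlib

instance nonemptyFixedCoord {m : ℕ} {A : Fin m → Type*} [∀ j, Nonempty (A j)]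
    (j : Fin m) (a : A j) : Nonempty {u : ∀ k, A k // u j = a} :=
  ⟨⟨Function.update (fun k => Classical.arbitrary (A k)) j a, by simp⟩⟩

/-- Centralized deterministic Q-learning iterates, updated at the visited pairs `(xs N, us N)`. -/
noncomputable def Qcent {X : Type*} {m : ℕ} {A : Fin m → Type*}
    [DecidableEq X] [∀ j, DecidableEq (A j)]
    (δ : X → (∀ j, A j) → X) (r : X → (∀ j, A j) → ℝ) (β : ℝ)
    (xs : ℕ → X) (us : ℕ → ∀ j, A j) : ℕ → X → (∀ j, A j) → ℝ
  | 0 => fun _ _ => 0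
  | N + 1 => fun x u =>
      if x = xs N ∧ u = us N then
        r x u + β * ⨆ u' : ∀ j, A j, Qcent δ r β xs us N (δ x u) u'
      else Qcent δ r β xs us N x u

/-- Distributed deterministic Q-learning iterates of agent `j`. -/
noncomputable def qdist {X : Type*} {m : ℕ} {A : Fin m → Type*}
    [DecidableEq X] [∀ j, DecidableEq (A j)]
    (δ : X → (∀ j, A j) → X) (r : X → (∀ j, A j) → ℝ) (β : ℝ)
    (xs : ℕ → X) (us : ℕ → ∀ j, A j) (j : Fin m) : ℕ → X → A j → ℝ
  | 0 => fun _ _ => 0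
  | N + 1 => fun x a =>
      if x = xs N ∧ a = us N j then
        max (qdist δ r β xs us j N x a)
          (r x (us N) + β * ⨆ a' : A j, qdist δ r β xs us j N (δ x (us N)) a')
      else qdist δ r β xs us j N x a


section Aux

variable {X : Type*} {m : ℕ} {A : Fin m → Type*}
    [DecidableEq X] [∀ j, DecidableEq (A j)]
    [Fintype X] [∀ j, Fintype (A j)] [Nonempty X] [∀ j, Nonempty (A j)]
    (δ : X → (∀ j, A j) → X) (r : X → (∀ j, A j) → ℝ)
    (β : ℝ) (xs : ℕ → X) (us : ℕ → ∀ j, A j)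

lemma bddR {α : Type*} [Finite α] (f : α → ℝ) : BddAbove (Set.range f) :=
  (Set.finite_range f).bddAbove

lemma Qnonneg (hβ0 : 0 ≤ β) (hr : ∀ x u, 0 ≤ r x u) :
    ∀ N x u, 0 ≤ Qcent δ r β xs us N x u := by
  intro N
  induction N with
  | zero => intro x u; simp [Qcent]
  | succ N ih =>
    intro x u
    simp only [Qcent]
    split
    · have h1 : 0 ≤ ⨆ u' : ∀ j, A j, Qcent δ r β xs us N (δ x u) u' :=
        (ih (δ x u) (Classical.arbitrary _)).trans (le_ciSup (bddR _) _)
      exact add_nonneg (hr x u) (mul_nonneg hβ0 h1)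
    · exact ih x u

lemma Qle (hβ0 : 0 ≤ β) (hr : ∀ x u, 0 ≤ r x u) :
    ∀ N x u, Qcent δ r β xs us N x u ≤
      r x u + β * ⨆ u' : ∀ j, A j, Qcent δ r β xs us N (δ x u) u' := by
  intro N
  induction N with
  | zero =>
    intro x u
    have h1 : (0:ℝ) ≤ ⨆ u' : ∀ j, A j, Qcent δ r β xs us 0 (δ x u) u' :=
      (Qnonneg δ r β xs us hβ0 hr 0 (δ x u) (Classical.arbitrary _)).trans
        (le_ciSup (bddR _) _)
    simpa [Qcent] using add_nonneg (hr x u) (mul_nonneg hβ0 h1)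
  | succ N ih =>
    have mono : ∀ y v, Qcent δ r β xs us N y v ≤ Qcent δ r β xs us (N+1) y v := by
      intro y v
      simp only [Qcent]
      split
      · exact ih y v
      · exact le_rfl
    have smono : ∀ y, (⨆ u' : ∀ j, A j, Qcent δ r β xs us N y u') ≤
        ⨆ u' : ∀ j, A j, Qcent δ r β xs us (N+1) y u' := by
      intro y
      exact ciSup_mono (bddR _) (fun u' => mono y u')
    intro x u
    conv_lhs => simp only [Qcent]
    split
    · exact add_le_add_right (mul_le_mul_of_nonneg_left (smono (δ x u)) hβ0) _
    · exact (ih x u).trans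
        (add_le_add_right (mul_le_mul_of_nonneg_left (smono (δ x u)) hβ0) _)

lemma Qmono (hβ0 : 0 ≤ β) (hr : ∀ x u, 0 ≤ r x u) (N : ℕ) (x : X) (u : ∀ j, A j) :
    Qcent δ r β xs us N x u ≤ Qcent δ r β xs us (N+1) x u := by
  simp only [Qcent]
  split
  · exact Qle δ r β xs us hβ0 hr N x u
  · exact le_rfl

lemma sup_collapse (j : Fin m) (f : (∀ k, A k) → ℝ) :
    (⨆ a : A j, ⨆ u : {u : ∀ k, A k // u j = a}, f (u : ∀ k, A k)) = ⨆ u, f u := by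
  apply le_antisymm
  · exact ciSup_le fun a => ciSup_le fun u => le_ciSup (bddR f) (u : ∀ k, A k)
  · refine ciSup_le fun u => ?_
    calc f u ≤ ⨆ v : {v : ∀ k, A k // v j = u j}, f (v : ∀ k, A k) :=
          le_ciSup (f := fun v : {v : ∀ k, A k // v j = u j} => f (v : ∀ k, A k))
            (bddR _) (⟨u, rfl⟩ : {v : ∀ k, A k // v j = u j})
      _ ≤ ⨆ a : A j, ⨆ v : {v : ∀ k, A k // v j = a}, f (v : ∀ k, A k) :=
          le_ciSup (f := fun a : A j => ⨆ v : {v : ∀ k, A k // v j = a}, f (v : ∀ k, A k)) (bddR _) (u j)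

end Aux

/-- Proposition 1: the distributed iterates equal the partial maxima of the centralized ones. -/

theorem stmt1 {X : Type*} {m : ℕ} {A : Fin m → Type*}
    [DecidableEq X] [∀ j, DecidableEq (A j)]
    [Fintype X] [∀ j, Fintype (A j)] [Nonempty X] [∀ j, Nonempty (A j)]
    (δ : X → (∀ j, A j) → X) (r : X → (∀ j, A j) → ℝ)
    (β : ℝ) (hβ0 : 0 ≤ β) (hβ1 : β < 1)
    (hr : ∀ x u, 0 ≤ r x u) (xs : ℕ → X) (us : ℕ → ∀ j, A j) :
    ∀ (j : Fin m) (N : ℕ) (x : X) (a : A j),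
      qdist δ r β xs us j N x a =
        ⨆ u : {u : ∀ k, A k // u j = a}, Qcent δ r β xs us N x (u : ∀ k, A k) := by
  intro j N
  induction N with
  | zero =>
    intro x a
    simp [Qcent, qdist, ciSup_const]
  | succ N ih =>
    intro x a
    by_cases h : x = xs N ∧ a = us N j
    · obtain ⟨hx, ha⟩ := h
      simp only [qdist]
      rw [if_pos ⟨hx, ha⟩]
      have hsup : (⨆ a' : A j, qdist δ r β xs us j N (δ x (us N)) a') =
          ⨆ u' : ∀ k, A k, Qcent δ r β xs us N (δ x (us N)) u' := by
        rw [← sup_collapse (A := A) j (fun u => Qcent δ r β xs us N (δ x (us N)) u)]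
        exact iSup_congr fun a' => ih (δ x (us N)) a'
      have hQup : Qcent δ r β xs us (N+1) x (us N) =
          r x (us N) + β * ⨆ u' : ∀ k, A k, Qcent δ r β xs us N (δ x (us N)) u' := by
        simp only [Qcent]
        rw [if_pos ⟨hx, trivial⟩]
      rw [ih x a, hsup, ← hQup]
      apply le_antisymm
      · apply max_le
        · exact ciSup_mono (bddR _) fun u => Qmono δ r β xs us hβ0 hr N x _
        · exact le_ciSup (f := fun u : {u : ∀ k, A k // u j = a} => Qcent δ r β xs us (N+1) x (u : ∀ k, A k)) (bddR _) ⟨us N, ha.symm⟩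
      · refine ciSup_le fun u => ?_
        by_cases hu : (u : ∀ k, A k) = us N
        · rw [hu]; exact le_max_right _ _
        · have : Qcent δ r β xs us (N+1) x (u : ∀ k, A k) =
              Qcent δ r β xs us N x (u : ∀ k, A k) := by
            simp only [Qcent]
            rw [if_neg (fun hc => hu hc.2)]
          rw [this]
          exact le_max_of_le_left (le_ciSup (f := fun u : {u : ∀ k, A k // u j = a} => Qcent δ r β xs us N x (u : ∀ k, A k)) (bddR _) u)
    · simp only [qdist]
      rw [if_neg h, ih x a]
      refine iSup_congr fun u => ?_
      simp only [Qcent]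
      rw [if_neg ?_]
      rintro ⟨hx, hu⟩
      exact h ⟨hx, by rw [← u.2, hu]⟩
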